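/- Let n ≥ 2, let x_1,…,x_n ∈ {0,1}^d be pairwise distinct, let y_1,…,y_n ∈ {−1,1}, and let k(x,x') = exp(−100·(ln n)·‖x−x'‖₂²). Define D : ℝ^n → ℝ by D(γ) = Σ_{i=1}^n γ_i − (1/2)·Σ_{i,j=1}^n γ_i γ_j y_i y_j k(x_i,x_j). If γ* ∈ ℝ^n with γ*_i ≥ 0 for all i attains the maximum of D over the nonnegative orthant, then γ*_i ≤ 3n for every i. -/

import Mathlib

open Finset

/-- The Gaussian kernel with parameter `C = 100 ln n`. -/
noncomputable def gaussK (n d : ℕ) (x y : Fin d → ℝ) : ℝ :=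
  Real.exp (-(100 * Real.log n) * ∑ l, (x l - y l) ^ 2)
set_option maxHeartbeats 1000000 in

/-- Any maximizer of the dual hard-margin SVM objective
`D(γ) = Σ_i γ_i − (1/2) Σ_{i,j} γ_i γ_j y_i y_j k(x_i,x_j)` over the
nonnegative orthant has all coordinates at most `3n`. -/
theorem dual_svm_maximizer_bounded (n d : ℕ) (hn : 2 ≤ n)
    (x : Fin n → Fin d → ℝ)
    (hx01 : ∀ i l, x i l = 0 ∨ x i l = 1)
    (hxinj : Function.Injective x)
    (y : Fin n → ℝ) (hy : ∀ i, y i = 1 ∨ y i = -1)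
    (γs : Fin n → ℝ) (hγs : ∀ i, 0 ≤ γs i)
    (hmax : ∀ γ : Fin n → ℝ, (∀ i, 0 ≤ γ i) →
      (∑ i, γ i) - (1 / 2) * ∑ i, ∑ j, γ i * γ j * y i * y j * gaussK n d (x i) (x j)
        ≤ (∑ i, γs i) -
            (1 / 2) * ∑ i, ∑ j, γs i * γs j * y i * y j * gaussK n d (x i) (x j)) :
    ∀ i, γs i ≤ 3 * (n : ℝ) := by
  have hn2 : (2:ℝ) ≤ (n:ℝ) := by exact_mod_cast hn
  have hnpos : (0:ℝ) < (n:ℝ) := by linarith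
  set ε : ℝ := ((n:ℝ)^3)⁻¹ with hε
  have hεpos : 0 < ε := by positivity
  set S : ℝ := ∑ j, γs j with hSdef
  have hS0 : 0 ≤ S := Finset.sum_nonneg fun j _ => hγs j
  have hεid : ε * (n:ℝ)^3 = 1 := inv_mul_cancel₀ (by positivity)
  -- kernel facts
  have hk_self : ∀ i, gaussK n d (x i) (x i) = 1 := by
    intro i; simp [gaussK]
  have hk_sym : ∀ i j, gaussK n d (x i) (x j) = gaussK n d (x j) (x i) := by
    intro i j; unfold gaussK; congr 2
    exact Finset.sum_congr rfl fun l _ => by ring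
  have hk_nonneg : ∀ i j, 0 ≤ gaussK n d (x i) (x j) := fun i j => (Real.exp_pos _).le
  have hlog : 0 < Real.log n := Real.log_pos (by exact_mod_cast hn)
  have hk_small : ∀ i j, i ≠ j → gaussK n d (x i) (x j) ≤ ε := by
    intro i j hij
    have hxij : x i ≠ x j := fun h => hij (hxinj h)
    obtain ⟨l, hl⟩ : ∃ l, x i l ≠ x j l := by
      by_contra h; push_neg at h; exact hxij (funext h)
    have h1 : (1:ℝ) ≤ ∑ l, (x i l - x j l)^2 := by
      have hterm : (1:ℝ) ≤ (x i l - x j l)^2 := by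
        rcases hx01 i l with h1 | h1 <;> rcases hx01 j l with h2 | h2 <;>
          rw [h1, h2] at hl ⊢ <;> norm_num at hl <;> norm_num
      exact hterm.trans (Finset.single_le_sum (f := fun l => (x i l - x j l)^2)
        (fun l _ => sq_nonneg _) (Finset.mem_univ l))
    have hεexp : ε = Real.exp (-(3 * Real.log n)) := by
      rw [Real.exp_neg, hε]
      congr 1
      rw [show (3:ℝ) * Real.log n = Real.log ((n:ℝ)^3) by rw [Real.log_pow]; norm_num,
        Real.exp_log (by positivity)]
    rw [hεexp]
    unfold gaussK
    apply Real.exp_le_exp.mpr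
    nlinarith [hlog, h1]
  -- y facts
  have hy2 : ∀ i, y i ^ 2 = 1 := fun i => by rcases hy i with h | h <;> rw [h] <;> norm_num
  -- key coordinate bound
  have hcoord : ∀ i, γs i ≤ 2 + 2 * ε * S := by
    intro i
    set γ' := Function.update γs i 0 with hγ'
    have hγ'nn : ∀ j, 0 ≤ γ' j := by
      intro j
      by_cases h : j = i
      · simp [hγ', h]
      · rw [hγ', Function.update_of_ne h]; exact hγs j
    have H := hmax γ' hγ'nn
    set E := Finset.univ.erase i with hE
    have hupd : ∀ j ∈ E, γ' j = γs j := fun j hj =>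
      Function.update_of_ne (Finset.ne_of_mem_erase hj) _ _
    have hγ'i : γ' i = 0 := Function.update_self i 0 γs
    set T : ℝ := ∑ j ∈ E, γs j * y j * gaussK n d (x i) (x j) with hT
    set R : ℝ := ∑ j ∈ E, ∑ k ∈ E, γs j * γs k * y j * y k * gaussK n d (x j) (x k) with hR
    -- e1
    have e1 : ∑ j, γ' j = S - γs i := by
      rw [hSdef, ← Finset.add_sum_erase _ γ' (Finset.mem_univ i),
        ← Finset.add_sum_erase _ γs (Finset.mem_univ i), hγ'i,
        Finset.sum_congr rfl hupd]
      ring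
    -- e2
    have e2 : (∑ j, ∑ k, γ' j * γ' k * y j * y k * gaussK n d (x j) (x k)) = R := by
      rw [← Finset.add_sum_erase _ _ (Finset.mem_univ i)]
      have hrow : (∑ k, γ' i * γ' k * y i * y k * gaussK n d (x i) (x k)) = 0 := by
        apply Finset.sum_eq_zero; intro k _; rw [hγ'i]; ring
      rw [hrow, zero_add, hR]
      apply Finset.sum_congr rfl
      intro j hj
      rw [← Finset.add_sum_erase _ _ (Finset.mem_univ i)]
      have : γ' j * γ' i * y j * y i * gaussK n d (x j) (x i) = 0 := by rw [hγ'i]; ring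
      rw [this, zero_add]
      exact Finset.sum_congr rfl fun k hk => by rw [hupd j hj, hupd k hk]
    -- e3
    have e3 : (∑ j, ∑ k, γs j * γs k * y j * y k * gaussK n d (x j) (x k))
        = γs i ^ 2 + 2 * (γs i * (y i * T)) + R := by
      rw [← Finset.add_sum_erase _ _ (Finset.mem_univ i)]
      have hrow : (∑ k, γs i * γs k * y i * y k * gaussK n d (x i) (x k))
          = γs i ^ 2 + γs i * (y i * T) := by
        rw [← Finset.add_sum_erase _ _ (Finset.mem_univ i), hk_self]
        have : γs i * γs i * y i * y i * 1 = γs i ^ 2 := by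
          rcases hy i with h | h <;> rw [h] <;> ring
        rw [this, hT, Finset.mul_sum, Finset.mul_sum]
        congr 1
        exact Finset.sum_congr rfl fun k _ => by ring
      have hcols : (∑ j ∈ E, ∑ k, γs j * γs k * y j * y k * gaussK n d (x j) (x k))
          = γs i * (y i * T) + R := by
        have : ∀ j ∈ E, (∑ k, γs j * γs k * y j * y k * gaussK n d (x j) (x k))
            = γs i * (y i * (γs j * y j * gaussK n d (x i) (x j)))
              + ∑ k ∈ E, γs j * γs k * y j * y k * gaussK n d (x j) (x k) := by
          intro j hj
          rw [← Finset.add_sum_erase _ _ (Finset.mem_univ i)]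
          congr 1
          rw [hk_sym j i]; ring
        rw [Finset.sum_congr rfl this, Finset.sum_add_distrib, hR, hT,
          Finset.mul_sum, Finset.mul_sum]
      rw [hrow, hcols]; ring
    rw [e1, e2, e3] at H
    -- T bound
    have hTb : -(ε * S) ≤ y i * T := by
      have h1 : ∀ j ∈ E, -(ε * γs j) ≤ y i * (γs j * y j * gaussK n d (x i) (x j)) := by
        intro j hj
        have hk1 := hk_nonneg i j
        have hk2 := hk_small i j (Finset.ne_of_mem_erase hj).symm
        have hg := hγs j
        rcases hy i with h | h <;> rcases hy j with h' | h' <;> rw [h, h'] <;> nlinarith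
      have h2 : -(ε * ∑ j ∈ E, γs j) ≤ y i * T := by
        calc -(ε * ∑ j ∈ E, γs j) = ∑ j ∈ E, -(ε * γs j) := by
              rw [Finset.mul_sum, ← Finset.sum_neg_distrib]
          _ ≤ ∑ j ∈ E, y i * (γs j * y j * gaussK n d (x i) (x j)) := Finset.sum_le_sum h1
          _ = y i * T := by rw [hT, Finset.mul_sum]
      have h3 : (∑ j ∈ E, γs j) ≤ S := by
        rw [hSdef, ← Finset.add_sum_erase _ γs (Finset.mem_univ i)]
        nlinarith [hγs i]
      linarith [h2, mul_le_mul_of_nonneg_left h3 hεpos.le]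
    -- conclude
    clear_value T R S ε
    clear hmax e1 e2 e3 hR hT hupd hγ'i hγ'nn hγ' hk_small hk_self hk_sym hk_nonneg
    have hm := mul_le_mul_of_nonneg_left hTb (hγs i)
    have hsq : γs i ^ 2 ≤ 2 * γs i + 2 * (γs i * (ε * S)) := by linarith [H, hm]
    by_contra hcon
    push_neg at hcon
    have hεS : 0 ≤ ε * S := mul_nonneg hεpos.le hS0
    have hspos : 0 < γs i := by linarith
    have hm2 := mul_lt_mul_of_pos_left hcon hspos
    linarith [hsq, hm2]
  -- sum bound
  clear_value S ε
  clear hmax hk_small hk_self hk_sym hk_nonneg hxinj hx01 hlog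
  have hcube : 4*(n:ℝ) ≤ (n:ℝ)^3 := by nlinarith [hn2, hnpos, sq_nonneg ((n:ℝ)-2)]
  have hnn : 2 * (n:ℝ) * ε ≤ 1/2 := by
    linarith [mul_le_mul_of_nonneg_left hcube hεpos.le, hεid]
  have hSle : S ≤ (n:ℝ) * (2 + 2 * ε * S) := by
    calc S = ∑ j, γs j := hSdef
      _ ≤ ∑ _j : Fin n, (2 + 2 * ε * S) := Finset.sum_le_sum fun j _ => hcoord j
      _ = (n:ℝ) * (2 + 2 * ε * S) := by
          rw [Finset.sum_const, Finset.card_univ, Fintype.card_fin, nsmul_eq_mul]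
  have hS4 : S ≤ 4 * n := by
    linarith [mul_le_mul_of_nonneg_right hnn hS0, hSle]
  intro i
  have h1 := hcoord i
  have h2 := mul_le_mul_of_nonneg_left hS4 hεpos.le
  linarith [hnn, hn2]
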